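/- Let A and B be self-adjoint operators on a Hilbert space with orthonormal eigenbases {u_i} (eigenvalues λ_i(A)) and {w_i} (eigenvalues λ_i(B)) respectively. Let Pr_{w_i} denote the orthogonal projection onto the span of w_i. Then for each i, the distance from u_i to its projection satisfies ‖u_i − Pr_{w_i} u_i‖ ≤ ‖B u_i − A u_i‖ / min_{j ≠ i} |λ_j(B) − λ_i(A)|, provided the minimum in the denominator is positive. -/
import Mathlib


open scoped RealInnerProductSpace

/-- Davis–Kahan type bound: distance from eigenvector `u i` of `A` to its projection onto
the span of the eigenvector `w i` of `B` is controlled by `‖B (u i) - A (u i)‖` divided by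
(a positive lower bound `c` for) the minimal gap `min_{j ≠ i} |λ_j(B) - λ_i(A)|`. -/
theorem stmt_0
    {H : Type*} [NormedAddCommGroup H] [InnerProductSpace ℝ H] [CompleteSpace H]
    (A B : H →L[ℝ] H) (hA : IsSelfAdjoint A) (hB : IsSelfAdjoint B)
    (u : ℕ → H) (w : HilbertBasis ℕ ℝ H)
    (lA lB : ℕ → ℝ)
    (hu_norm : ∀ i, ‖u i‖ = 1)
    (hAu : ∀ i, A (u i) = lA i • u i)
    (hBw : ∀ j, B (w j) = lB j • w j)
    (i : ℕ) (c : ℝ) (hc : 0 < c)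
    (hmin : ∀ j, j ≠ i → c ≤ |lB j - lA i|) :
    ‖u i - ⟪u i, w i⟫ • (w i : H)‖ ≤ ‖B (u i) - A (u i)‖ / c := by
  set v := u i - ⟪u i, w i⟫ • (w i : H) with hv
  set D := B (u i) - A (u i) with hD
  have horth := orthonormal_iff_ite.mp w.orthonormal
  -- inner products of D with the basis
  have hDw : ∀ j, ⟪D, (w j : H)⟫ = (lB j - lA i) * ⟪u i, (w j : H)⟫ := by
    intro j
    have h0 : ⟪B (u i), (w j : H)⟫ = ⟪u i, B (w j)⟫ := hB.isSymmetric _ _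
    have h1 : ⟪B (u i), (w j : H)⟫ = lB j * ⟪u i, (w j : H)⟫ := by
      rw [h0, hBw j, real_inner_smul_right]
    have h2 : ⟪A (u i), (w j : H)⟫ = lA i * ⟪u i, (w j : H)⟫ := by
      rw [hAu i, real_inner_smul_left]
    rw [hD, inner_sub_left, h1, h2]; ring
  -- inner products of v with the basis
  have hvw : ∀ j, ⟪v, (w j : H)⟫ = if j = i then 0 else ⟪u i, (w j : H)⟫ := by
    intro j
    rw [hv, inner_sub_left, real_inner_smul_left]
    by_cases h : j = i
    · subst h
      have := horth j j
      rw [if_pos rfl] at this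
      rw [this, if_pos rfl]; ring
    · have := horth i j
      rw [if_neg (Ne.symm h)] at this
      rw [this, if_neg h]; ring
  -- pointwise bound
  have hpt : ∀ j, c ^ 2 * (⟪v, (w j : H)⟫ * ⟪(w j : H), v⟫)
      ≤ ⟪D, (w j : H)⟫ * ⟪(w j : H), D⟫ := by
    intro j
    have e1 : ⟪(w j : H), v⟫ = ⟪v, (w j : H)⟫ := real_inner_comm _ _
    have e2 : ⟪(w j : H), D⟫ = ⟪D, (w j : H)⟫ := real_inner_comm _ _
    simp only [e1, e2, hvw j, hDw j]
    by_cases h : j = i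
    · simp only [if_pos h]
      have : ⟪D, (w j : H)⟫ * ⟪D, (w j : H)⟫ = ⟪D, (w j : H)⟫ ^ 2 := sq (⟪D, (w j : H)⟫) ▸ by ring
      nlinarith [sq_nonneg (⟪D, (w j : H)⟫)]
    · simp only [if_neg h]
      have hm := hmin j h
      nlinarith [sq_nonneg (⟪u i, (w j : H)⟫), sq_abs (lB j - lA i),
        mul_self_le_mul_self hc.le hm]
  have hsv := w.summable_inner_mul_inner v v
  have hsD := w.summable_inner_mul_inner D D
  have key : c ^ 2 * ‖v‖ ^ 2 ≤ ‖D‖ ^ 2 := by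
    have h1 : c ^ 2 * ⟪v, v⟫ ≤ ⟪D, D⟫ := by
      rw [← w.tsum_inner_mul_inner v v, ← w.tsum_inner_mul_inner D D, ← tsum_mul_left]
      exact Summable.tsum_le_tsum hpt (hsv.mul_left _) hsD
    rwa [real_inner_self_eq_norm_sq, real_inner_self_eq_norm_sq] at h1
  rw [le_div_iff₀ hc]
  nlinarith [norm_nonneg v, norm_nonneg D, mul_pos hc hc]
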